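/- Let X be a compact Hausdorff space, Y a Hausdorff space, and g : X → Y a continuous surjection that is monotone and open. Let A ⊆ X be closed. Define the relation x ~ x' if and only if x = x', or (g(x) = g(x') and the fiber g⁻¹({g(x)}) meets A). Then ~ is an equivalence relation, the quotient space Z = X/~ is Hausdorff, the quotient map φ : X → Z is a closed map, and the induced map π : Z → Y satisfying π ∘ φ = g is a well-defined continuous closed surjection that is monotone and open. -/
import Mathlib


noncomputable section

/-- The relation on `X` collapsing each fiber of `g` that meets `A` to a point:
`x ~ x'` iff `x = x'`, or `g x = g x'` and the fiber `g ⁻¹' {g x}` meets `A`. -/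
def fiberPinchRel {X Y : Type*} (g : X → Y) (A : Set X) (x x' : X) : Prop :=
  x = x' ∨ (g x = g x' ∧ (g ⁻¹' {g x} ∩ A).Nonempty)

/-- Collapsing to points all fibers of a monotone open continuous surjection `g` of a
compact Hausdorff space that meet a closed set `A` gives an equivalence relation whose
quotient is Hausdorff, whose quotient map is closed, and whose induced map to `Y` is a
well-defined continuous closed monotone open surjection. -/
theorem collapse_fibers_meeting_closed_set
    {X Y : Type*} [TopologicalSpace X] [CompactSpace X] [T2Space X]
    [TopologicalSpace Y] [T2Space Y]
    (g : X → Y) (hgc : Continuous g) (hgs : Function.Surjective g)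
    (hgm : ∀ y : Y, IsPreconnected (g ⁻¹' {y})) (hgo : IsOpenMap g)
    (A : Set X) (hA : IsClosed A) :
    Equivalence (fiberPinchRel g A) ∧
    T2Space (Quot (fiberPinchRel g A)) ∧
    IsClosedMap (Quot.mk (fiberPinchRel g A)) ∧
    ∃ π : Quot (fiberPinchRel g A) → Y,
      (∀ x : X, π (Quot.mk (fiberPinchRel g A) x) = g x) ∧
      Continuous π ∧ IsClosedMap π ∧ Function.Surjective π ∧
      (∀ y : Y, IsPreconnected (π ⁻¹' {y})) ∧ IsOpenMap π := by
  set r := fiberPinchRel g A with hr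
  set S : Set X := g ⁻¹' (g '' A) with hSdef
  have hgclosed : IsClosedMap g := hgc.isClosedMap
  have hS_closed : IsClosed S := (hgclosed A hA).preimage hgc
  have hmemS : ∀ x : X, (g ⁻¹' {g x} ∩ A).Nonempty ↔ x ∈ S := by
    intro x
    constructor
    · rintro ⟨a, ha1, ha2⟩; exact ⟨a, ha2, ha1⟩
    · rintro ⟨a, ha, hga⟩; exact ⟨a, hga, ha⟩
  have hr_iff : ∀ x x', r x x' ↔ (x = x' ∨ (g x = g x' ∧ x ∈ S)) := by
    intro x x'
    simp only [hr, fiberPinchRel, hmemS]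
  have hSg : ∀ x x' : X, g x = g x' → x ∈ S → x' ∈ S := by
    intro x x' h hx
    simpa [hSdef, Set.mem_preimage, ← h] using hx
  -- equivalence
  have hequiv : Equivalence r := by
    constructor
    · intro x; exact Or.inl rfl
    · intro x x' h
      rcases (hr_iff x x').1 h with h1 | ⟨h1, h2⟩
      · exact Or.inl h1.symm
      · exact (hr_iff x' x).2 (Or.inr ⟨h1.symm, hSg x x' h1 h2⟩)
    · intro x y z hxy hyz
      rcases (hr_iff x y).1 hxy with h1 | ⟨h1, h2⟩
      · exact h1 ▸ hyz
      · rcases (hr_iff y z).1 hyz with h3 | ⟨h3, h4⟩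
        · exact (hr_iff x z).2 (Or.inr ⟨h3 ▸ h1, h2⟩)
        · exact (hr_iff x z).2 (Or.inr ⟨h1.trans h3, h2⟩)
  have hmk_eq : ∀ x x' : X, Quot.mk r x = Quot.mk r x' ↔ r x x' := by
    intro x x'
    constructor
    · intro h
      exact hequiv.eqvGen_iff.mp (Quot.eq.mp h)
    · exact Quot.sound
  -- saturation formula
  have hsat : ∀ C : Set X,
      Quot.mk r ⁻¹' (Quot.mk r '' C) = C ∪ g ⁻¹' (g '' (C ∩ S)) := by
    intro C
    ext x'
    simp only [Set.mem_preimage, Set.mem_image, Set.mem_union, Set.mem_inter_iff]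
    constructor
    · rintro ⟨x, hxC, hxx'⟩
      rcases (hr_iff x x').1 ((hmk_eq x x').1 hxx') with h1 | ⟨h1, h2⟩
      · exact Or.inl (h1 ▸ hxC)
      · exact Or.inr ⟨x, ⟨hxC, h2⟩, h1⟩
    · rintro (hx | ⟨x, ⟨hxC, hxS⟩, hgx⟩)
      · exact ⟨x', hx, rfl⟩
      · exact ⟨x, hxC, (hmk_eq x x').2 ((hr_iff x x').2 (Or.inr ⟨hgx, hxS⟩))⟩
  have hqm := isQuotientMap_quot_mk (r := r)
  have hφclosed : IsClosedMap (Quot.mk r) := by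
    intro C hC
    rw [← hqm.isClosed_preimage, hsat C]
    exact hC.union ((hgclosed _ (hC.inter hS_closed)).preimage hgc)
  -- T2
  have hT2 : T2Space (Quot r) := by
    constructor
    intro a b hab
    obtain ⟨x1, rfl⟩ := Quot.exists_rep a
    obtain ⟨x2, rfl⟩ := Quot.exists_rep b
    set C1 := Quot.mk r ⁻¹' {Quot.mk r x1} with hC1def
    set C2 := Quot.mk r ⁻¹' {Quot.mk r x2} with hC2def
    have hsingle : ∀ x : X, ({Quot.mk r x} : Set (Quot r)) = Quot.mk r '' {x} := by
      intro x; rw [Set.image_singleton]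
    have hC1closed : IsClosed C1 := by
      rw [hC1def, hsingle, hsat]
      exact isClosed_singleton.union
        ((hgclosed _ (isClosed_singleton.inter hS_closed)).preimage hgc)
    have hC2closed : IsClosed C2 := by
      rw [hC2def, hsingle, hsat]
      exact isClosed_singleton.union
        ((hgclosed _ (isClosed_singleton.inter hS_closed)).preimage hgc)
    have hdisj : Disjoint C1 C2 := by
      rw [Set.disjoint_left]
      intro x hx1 hx2
      apply hab
      simp only [hC1def, hC2def, Set.mem_preimage, Set.mem_singleton_iff] at hx1 hx2
      exact hx1.symm.trans hx2
    obtain ⟨U1, U2, hU1o, hU2o, hCU1, hCU2, hUdisj⟩ :=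
      NormalSpace.normal C1 C2 hC1closed hC2closed hdisj
    refine ⟨(Quot.mk r '' U1ᶜ)ᶜ, (Quot.mk r '' U2ᶜ)ᶜ, ?_, ?_, ?_, ?_, ?_⟩
    · exact (hφclosed _ hU1o.isClosed_compl).isOpen_compl
    · exact (hφclosed _ hU2o.isClosed_compl).isOpen_compl
    · intro h
      obtain ⟨x, hx, hxeq⟩ := h
      exact hx (hCU1 (by simp [hC1def, hxeq]))
    · intro h
      obtain ⟨x, hx, hxeq⟩ := h
      exact hx (hCU2 (by simp [hC2def, hxeq]))
    · rw [Set.disjoint_left]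
      rintro z hz1 hz2
      obtain ⟨x, rfl⟩ := Quot.exists_rep z
      have hx1 : x ∈ U1 := by
        by_contra h
        exact hz1 ⟨x, h, rfl⟩
      have hx2 : x ∈ U2 := by
        by_contra h
        exact hz2 ⟨x, h, rfl⟩
      exact Set.disjoint_left.mp hUdisj hx1 hx2
  -- π
  have hcompat : ∀ x x', r x x' → g x = g x' := by
    intro x x' h
    rcases (hr_iff x x').1 h with h1 | ⟨h1, _⟩
    · exact h1 ▸ rfl
    · exact h1
  have hlift_image : ∀ T : Set (Quot r),
      Quot.lift g hcompat '' T = g '' (Quot.mk r ⁻¹' T) := by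
    intro T
    ext y
    constructor
    · rintro ⟨z, hz, rfl⟩
      obtain ⟨x, rfl⟩ := Quot.exists_rep z
      exact ⟨x, hz, rfl⟩
    · rintro ⟨x, hx, rfl⟩
      exact ⟨Quot.mk r x, hx, rfl⟩
  refine ⟨hequiv, hT2, hφclosed, Quot.lift g hcompat, fun x => rfl, ?_, ?_, ?_, ?_, ?_⟩
  · exact continuous_quot_lift hcompat hgc
  · intro C hC
    rw [hlift_image C]
    exact hgclosed _ (hC.preimage continuous_quot_mk)
  · intro y
    obtain ⟨x, rfl⟩ := hgs y
    exact ⟨Quot.mk r x, rfl⟩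
  · intro y
    have hfib : Quot.lift g hcompat ⁻¹' {y} = Quot.mk r '' (g ⁻¹' {y}) := by
      ext z
      obtain ⟨x, rfl⟩ := Quot.exists_rep z
      simp only [Set.mem_preimage, Set.mem_singleton_iff, Set.mem_image]
      constructor
      · intro h; exact ⟨x, h, rfl⟩
      · rintro ⟨x', hx', heq⟩
        rw [← hcompat x' x ((hmk_eq x' x).1 heq)]
        exact hx'
    rw [hfib]
    exact (hgm y).image _ (continuous_quot_mk.continuousOn)
  · intro V hV
    rw [hlift_image V]
    exact hgo _ (hqm.isOpen_preimage.mpr hV)
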